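/- Given proper cones K_1 ⊆ ℝ^n and K_2 ⊆ ℝ^m, the set of (K_1,K_2)-semipositive matrices contains a basis of the real vector space M_{m,n}(ℝ) of m×n matrices. -/

import Mathlib

open Matrix Set

/-- The nonnegative orthant in `ℝ^n`. -/
def posOrth (n : ℕ) : Set (Fin n → ℝ) := {x | ∀ i, 0 ≤ x i}

/-- A proper cone: closed, pointed convex cone with nonempty interior. -/
def IsProperCone {n : ℕ} (K : Set (Fin n → ℝ)) : Prop :=
  (∀ x ∈ K, ∀ y ∈ K, x + y ∈ K) ∧
  (∀ (c : ℝ), 0 ≤ c → ∀ x ∈ K, c • x ∈ K) ∧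
  IsClosed K ∧ K ∩ (-K) = {0} ∧ (interior K).Nonempty

/-- The dual cone of a set in `ℝ^n`. -/
def dualCone {n : ℕ} (K : Set (Fin n → ℝ)) : Set (Fin n → ℝ) :=
  {y | ∀ x ∈ K, 0 ≤ y ⬝ᵥ x}

/-- `(K₁,K₂)`-semipositivity of a matrix. -/
def SemiposCone {n m : ℕ} (K₁ : Set (Fin n → ℝ)) (K₂ : Set (Fin m → ℝ))
    (A : Matrix (Fin m) (Fin n) ℝ) : Prop :=
  ∃ x ∈ interior K₁, A.mulVec x ∈ interior K₂

/-- Semipositivity with respect to the nonnegative orthants. -/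
def Semipos {n m : ℕ} (A : Matrix (Fin m) (Fin n) ℝ) : Prop :=
  ∃ x : Fin n → ℝ, (∀ i, 0 < x i) ∧ ∀ j, 0 < A.mulVec x j

lemma zero_not_mem_interior_aux {n : ℕ} (hn : 0 < n) {K : Set (Fin n → ℝ)}
    (hK : IsProperCone K) : (0 : Fin n → ℝ) ∉ interior K := by
  haveI : Nonempty (Fin n) := ⟨⟨0, hn⟩⟩
  intro h0
  obtain ⟨-, -, -, hpt, -⟩ := hK
  rw [mem_interior_iff_mem_nhds, Metric.mem_nhds_iff] at h0
  obtain ⟨ε, hε, hball⟩ := h0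
  set v : Fin n → ℝ := fun _ => ε/2 with hv
  have hnorm : ‖v‖ = ε/2 := by
    rw [hv, pi_norm_const]
    rw [Real.norm_eq_abs, abs_of_pos (by linarith : (0:ℝ) < ε/2)]
  have hvK : v ∈ K := hball (by
    rw [Metric.mem_ball, dist_zero_right, hnorm]; linarith)
  have hvK' : -v ∈ K := hball (by
    rw [Metric.mem_ball, dist_zero_right, norm_neg, hnorm]; linarith)
  have : v ∈ K ∩ (-K) := ⟨hvK, by simpa [Set.mem_neg] using hvK'⟩
  rw [hpt] at this
  have := congrFun this ⟨0, hn⟩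
  simp [hv] at this
  linarith

theorem stmt_10 {n m : ℕ} (K₁ : Set (Fin n → ℝ)) (K₂ : Set (Fin m → ℝ))
    (hK₁ : IsProperCone K₁) (hK₂ : IsProperCone K₂) :
    ∃ b : Module.Basis (Fin m × Fin n) ℝ (Matrix (Fin m) (Fin n) ℝ),
      ∀ p, SemiposCone K₁ K₂ (b p) := by
  rcases Nat.eq_zero_or_pos n with hn | hn
  · subst hn
    haveI : IsEmpty (Fin m × Fin 0) := inferInstance
    haveI : Subsingleton (Matrix (Fin m) (Fin 0) ℝ) := inferInstance
    exact ⟨Module.Basis.empty _, fun p => p.2.elim0⟩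
  rcases Nat.eq_zero_or_pos m with hm | hm
  · subst hm
    haveI : IsEmpty (Fin 0 × Fin n) := inferInstance
    haveI : Subsingleton (Matrix (Fin 0) (Fin n) ℝ) := inferInstance
    exact ⟨Module.Basis.empty _, fun p => p.1.elim0⟩
  -- main case
  set S : Set (Matrix (Fin m) (Fin n) ℝ) := {A | SemiposCone K₁ K₂ A} with hS
  -- S is nonempty
  obtain ⟨x₀, hx₀⟩ := hK₁.2.2.2.2
  obtain ⟨u₀, hu₀⟩ := hK₂.2.2.2.2
  have hx₀ne : x₀ ≠ 0 := fun h => zero_not_mem_interior_aux hn hK₁ (h ▸ hx₀)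
  have hnn : (0:ℝ) ≤ x₀ ⬝ᵥ x₀ := Finset.sum_nonneg fun j _ => mul_self_nonneg _
  have ht : (0:ℝ) < x₀ ⬝ᵥ x₀ := hnn.lt_of_ne fun h => hx₀ne (dotProduct_self_eq_zero.mp h.symm)
  set A₀ : Matrix (Fin m) (Fin n) ℝ := fun i j => u₀ i * (x₀ j / (x₀ ⬝ᵥ x₀)) with hA₀
  have hA₀S : A₀ ∈ S := by
    refine ⟨x₀, hx₀, ?_⟩
    have : A₀.mulVec x₀ = u₀ := by
      funext i
      show ∑ j, u₀ i * (x₀ j / (x₀ ⬝ᵥ x₀)) * x₀ j = u₀ i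
      have h1 : ∀ j ∈ Finset.univ, u₀ i * (x₀ j / (x₀ ⬝ᵥ x₀)) * x₀ j
          = u₀ i / (x₀ ⬝ᵥ x₀) * (x₀ j * x₀ j) := fun j _ => by ring
      rw [Finset.sum_congr rfl h1, ← Finset.mul_sum,
        show ∑ j, x₀ j * x₀ j = x₀ ⬝ᵥ x₀ from rfl]
      field_simp
    rw [this]; exact hu₀
  -- S is open
  have hSopen : IsOpen S := by
    have : S = ⋃ x ∈ interior K₁, (fun A : Matrix (Fin m) (Fin n) ℝ => A.mulVec x) ⁻¹' interior K₂ := by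
      ext A; simp [hS, SemiposCone]
    rw [this]
    exact isOpen_biUnion fun x _ =>
      (isOpen_interior).preimage (continuous_id.matrix_mulVec continuous_const)
  -- span S = ⊤
  have hspanS : Submodule.span ℝ S = ⊤ := by
    apply Submodule.eq_top_of_nonempty_interior'
    exact ⟨A₀, interior_maximal Submodule.subset_span hSopen hA₀S⟩
  obtain ⟨b, hbS, hbspan, hbli⟩ := exists_linearIndependent ℝ S
  have hspanb : Submodule.span ℝ b = ⊤ := hbspan.trans hspanS
  let B : Module.Basis ↥b ℝ (Matrix (Fin m) (Fin n) ℝ) :=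
    Module.Basis.mk hbli (by rw [Subtype.range_coe, hspanb])
  haveI : Fintype ↥b := FiniteDimensional.fintypeBasisIndex B
  let e := B.indexEquiv (Matrix.stdBasis ℝ (Fin m) (Fin n))
  refine ⟨B.reindex e, fun p => ?_⟩
  rw [Module.Basis.reindex_apply, Module.Basis.mk_apply]
  exact hbS (e.symm p).2
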